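/- arXiv:1412.7412 — 2 statements merged into one kernel-verified Lean document; each statement's English description precedes it below -/
import Mathlib

section
/- Let x be a d×d symmetric positive semidefinite matrix, c ∈ M_d(ℝ) with cᵀc = x, W a d×d matrix Brownian motion, ε > 0, and n ≤ d. Define U_t = c + ε W_t I^n_d and X_t = U_tᵀ U_t. Then X_t is symmetric positive semidefinite for all t, and the quadratic covariations satisfy ⟨d(X_t)_{ij}, d(X_t)_{kl}⟩ = ε²[(X_t)_{ik}(I^n_d)_{jl} + (X_t)_{il}(I^n_d)_{jk} + (X_t)_{jk}(I^n_d)_{il} + (X_t)_{jl}(I^n_d)_{ik}] dt. -/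
open Matrix
set_option maxHeartbeats 800000 in
private lemma gram_cov_key_aux {d : ℕ} (n : ℕ) (i j k l : Fin d) (ε : ℝ)
    (u : Fin d → Fin d → ℝ) (a : Fin d) :
        (∑ b : Fin d,
          (ε * (u a i * (if b = j then (if (j:ℕ) < n then (1:ℝ) else 0) else 0)
                + u a j * (if b = i then (if (i:ℕ) < n then (1:ℝ) else 0) else 0)))
          * (ε * (u a k * (if b = l then (if (l:ℕ) < n then (1:ℝ) else 0) else 0)
                + u a l * (if b = k then (if (k:ℕ) < n then (1:ℝ) else 0) else 0))))
        = ε ^ 2 * (u a i * u a k * (if j = l then (if (j:ℕ) < n then (1:ℝ) else 0) else 0)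
            + u a i * u a l * (if j = k then (if (j:ℕ) < n then (1:ℝ) else 0) else 0)
            + u a j * u a k * (if i = l then (if (i:ℕ) < n then (1:ℝ) else 0) else 0)
            + u a j * u a l * (if i = k then (if (i:ℕ) < n then (1:ℝ) else 0) else 0)) := by
  simp only [mul_add, add_mul, mul_ite, ite_mul, mul_zero, zero_mul, mul_one,
    Finset.sum_add_distrib, Finset.sum_ite_eq', Finset.mem_univ, if_true]
  rcases eq_or_ne l j with h1 | h1 <;> rcases eq_or_ne l i with h2 | h2 <;>
    rcases eq_or_ne k j with h3 | h3 <;> rcases eq_or_ne k i with h4 | h4 <;>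
    subst_vars <;> simp_all [eq_comm] <;> split_ifs <;> ring


/-- For U_t = c + εW_t Iⁿ_d and X_t = U_tᵀU_t: X_t is positive semidefinite, and the
quadratic covariations (computed as inner products of the dW-coefficients) satisfy
⟨dX_{ij}, dX_{kl}⟩ = ε²[X_{ik}(Iⁿ)_{jl} + X_{il}(Iⁿ)_{jk} + X_{jk}(Iⁿ)_{il} + X_{jl}(Iⁿ)_{ik}]dt. -/
theorem gram_psd_and_covariation {d n : ℕ} (hn : n ≤ d) (ε : ℝ) (hε : 0 < ε)
    (x c : Matrix (Fin d) (Fin d) ℝ) (hx : x.PosSemidef) (hc : cᵀ * c = x)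
    (W : ℝ → Matrix (Fin d) (Fin d) ℝ) :
    let In : Matrix (Fin d) (Fin d) ℝ :=
      Matrix.diagonal fun j : Fin d => if (j : ℕ) < n then (1 : ℝ) else 0
    let U : ℝ → Matrix (Fin d) (Fin d) ℝ := fun t => c + ε • (W t * In)
    let X : ℝ → Matrix (Fin d) (Fin d) ℝ := fun t => (U t)ᵀ * U t
    (∀ t : ℝ, (X t).PosSemidef) ∧
    (∀ t : ℝ, ∀ i j k l : Fin d,
      (∑ a : Fin d, ∑ b : Fin d,
        (ε * (U t a i * (if b = j then In j j else 0)
              + U t a j * (if b = i then In i i else 0)))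
        * (ε * (U t a k * (if b = l then In l l else 0)
              + U t a l * (if b = k then In k k else 0))))
      = ε ^ 2 * (X t i k * In j l + X t i l * In j k
          + X t j k * In i l + X t j l * In i k)) := by
  intro In U X
  constructor
  · intro t
    have h := Matrix.posSemidef_conjTranspose_mul_self (U t)
    simpa [Matrix.conjTranspose_eq_transpose_of_trivial, X] using h
  · intro t i j k l
    have hIn : ∀ p q : Fin d, In p q = if p = q then (if (p:ℕ) < n then (1:ℝ) else 0) else 0 := by
      intro p q
      simp [In, Matrix.diagonal_apply]
    have hX : ∀ p q : Fin d, X t p q = ∑ a : Fin d, U t a p * U t a q := by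
      intro p q
      simp [X, Matrix.mul_apply, Matrix.transpose_apply]
    simp only [hIn, hX, if_true]
    rw [Finset.sum_congr rfl fun a _ => gram_cov_key_aux n i j k l ε (U t) a]
    simp only [Finset.mul_sum, Finset.sum_mul]
    rw [← Finset.sum_add_distrib, ← Finset.sum_add_distrib, ← Finset.sum_add_distrib]
    rw [Finset.mul_sum]
end

section
/- Let A, B : [0,∞) → 𝒮_d(ℝ) be continuous maps into symmetric matrices such that B(t) is positive semidefinite for every t ≥ 0. Suppose Υ ∈ 𝒮_d(ℝ) and g : [0,∞) → 𝒮_d(ℝ) is a C¹ solution of g'(t) = 2ε² g(t) I^n_d g(t) + g(t)A(t) + A(t)ᵀ g(t) + C(t), with Υ − g(0) positive semidefinite and, for all t ≥ 0, −[2ε² Υ I^n_d Υ + Υ A(t) + A(t)ᵀ Υ + C(t)] positive semidefinite. If h(t) := Υ − g(t), then h satisfies a linear-quadratic matrix differential inequality whose right-hand side at h = 0 is positive semidefinite; consequently (by the comparison theorem for matrix Riccati equations) Υ − g(t) is positive semidefinite for all t ≥ 0 in the maximal interval of existence. -/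
open Matrix Set Filter Topology

namespace RiccatiAux

variable {d : ℕ}

lemma dot_sym (M : Matrix (Fin d) (Fin d) ℝ) (hM : M.IsSymm) (v w : Fin d → ℝ) :
    v ⬝ᵥ M *ᵥ w = (M *ᵥ v) ⬝ᵥ w := by
  rw [Matrix.dotProduct_mulVec, ← Matrix.mulVec_transpose, hM.eq]

lemma quad_abs_le (M : Matrix (Fin d) (Fin d) ℝ) (x : Fin d → ℝ) (hx : ∀ i, |x i| ≤ 1) :
    |x ⬝ᵥ M *ᵥ x| ≤ ∑ i, ∑ j, |M i j| := by
  have h1 : |x ⬝ᵥ M *ᵥ x| ≤ ∑ i, |x i * (M *ᵥ x) i| := Finset.abs_sum_le_sum_abs _ _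
  refine le_trans h1 ?_
  refine Finset.sum_le_sum fun i _ => ?_
  have h2 : |(M *ᵥ x) i| ≤ ∑ j, |M i j| := by
    have e : (M *ᵥ x) i = ∑ j, M i j * x j := rfl
    rw [e]
    have h4 : |∑ j, M i j * x j| ≤ ∑ j, |M i j * x j| := Finset.abs_sum_le_sum_abs _ _
    refine le_trans h4 ?_
    refine Finset.sum_le_sum fun j _ => ?_
    calc |M i j * x j| = |M i j| * |x j| := abs_mul _ _
    _ ≤ |M i j| * 1 := by have := hx j; nlinarith [abs_nonneg (M i j)]
    _ = |M i j| := mul_one _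
  calc |x i * (M *ᵥ x) i| = |x i| * |(M *ᵥ x) i| := abs_mul _ _
  _ ≤ 1 * (∑ j, |M i j|) := by
      have := hx i
      have h3 := abs_nonneg ((M *ᵥ x) i)
      nlinarith [abs_nonneg (x i)]
  _ = ∑ j, |M i j| := one_mul _


lemma exists_abs_eq_one {x : Fin d → ℝ} (hx : ‖x‖ = 1) : ∃ i, |x i| = 1 := by
  have hd : Nonempty (Fin d) := by
    rcases Nat.eq_zero_or_pos d with h | h
    · subst h
      have hx0 : x = 0 := Subsingleton.elim _ _
      rw [hx0, norm_zero] at hx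
      exact absurd hx (by norm_num)
    · exact ⟨⟨0, h⟩⟩
  obtain ⟨i0, -, hi0⟩ := Finset.exists_mem_eq_sup Finset.univ Finset.univ_nonempty
    (fun i => ‖x i‖₊)
  refine ⟨i0, ?_⟩
  have h1 : ‖x‖₊ = ‖x i0‖₊ := by rw [Pi.nnnorm_def]; exact hi0
  have h2 := congrArg (fun r : NNReal => (r : ℝ)) h1
  simp only [coe_nnnorm] at h2
  rw [hx] at h2
  rw [← Real.norm_eq_abs]
  exact h2.symm

lemma mulVec_entry_abs_le (M : Matrix (Fin d) (Fin d) ℝ) (x : Fin d → ℝ)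
    (hx : ∀ i, |x i| ≤ 1) (i : Fin d) : |(M *ᵥ x) i| ≤ ∑ i, ∑ j, |M i j| := by
  have h2 : |(M *ᵥ x) i| ≤ ∑ j, |M i j| := by
    have e : (M *ᵥ x) i = ∑ j, M i j * x j := rfl
    rw [e]
    have h4 : |∑ j, M i j * x j| ≤ ∑ j, |M i j * x j| := Finset.abs_sum_le_sum_abs _ _
    refine le_trans h4 ?_
    refine Finset.sum_le_sum fun j _ => ?_
    calc |M i j * x j| = |M i j| * |x j| := abs_mul _ _
    _ ≤ |M i j| * 1 := by have := hx j; nlinarith [abs_nonneg (M i j)]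
    _ = |M i j| := mul_one _
  refine h2.trans ?_
  exact Finset.single_le_sum (f := fun i => ∑ j, |M i j|)
    (fun k _ => Finset.sum_nonneg fun j _ => abs_nonneg _) (Finset.mem_univ i)

lemma one_le_dot_self {x : Fin d → ℝ} (hx : ‖x‖ = 1) : 1 ≤ x ⬝ᵥ x := by
  obtain ⟨i0, hi0⟩ := exists_abs_eq_one hx
  have h1 : x i0 * x i0 = 1 := by nlinarith [abs_nonneg (x i0), sq_abs (x i0)]
  calc (1:ℝ) = x i0 * x i0 := h1.symm
  _ ≤ ∑ i, x i * x i :=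
      Finset.single_le_sum (fun i _ => mul_self_nonneg (x i)) (Finset.mem_univ i0)

lemma abs_entry_le_one {x : Fin d → ℝ} (hx : ‖x‖ = 1) (i : Fin d) : |x i| ≤ 1 := by
  have := norm_le_pi_norm x i
  rwa [hx, Real.norm_eq_abs] at this

lemma hasDerivAt_quad (F : ℝ → Matrix (Fin d) (Fin d) ℝ) (F' : Matrix (Fin d) (Fin d) ℝ)
    (x : Fin d → ℝ) (s : ℝ) (hF : ∀ i j, HasDerivAt (fun t => F t i j) (F' i j) s) :
    HasDerivAt (fun t => x ⬝ᵥ (F t) *ᵥ x) (x ⬝ᵥ F' *ᵥ x) s := by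
  have h : HasDerivAt (fun t => ∑ i, x i * ∑ j, F t i j * x j)
      (∑ i, x i * ∑ j, F' i j * x j) s := by
    refine HasDerivAt.fun_sum fun i _ => ?_
    exact (HasDerivAt.fun_sum fun j _ => (hF i j).mul_const (x j)).const_mul (x i)
  exact h

lemma quad_expand (r : ℝ) (P In A C : Matrix (Fin d) (Fin d) ℝ) (hP : P.IsSymm)
    (x : Fin d → ℝ) :
    x ⬝ᵥ ((r • (P * In * P) + P * A + Aᵀ * P + C) *ᵥ x)
      = r * ((P *ᵥ x) ⬝ᵥ In *ᵥ (P *ᵥ x)) + 2 * ((P *ᵥ x) ⬝ᵥ (A *ᵥ x)) + x ⬝ᵥ C *ᵥ x := by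
  have h1 : x ⬝ᵥ (P * In * P) *ᵥ x = (P *ᵥ x) ⬝ᵥ In *ᵥ (P *ᵥ x) := by
    rw [← Matrix.mulVec_mulVec, ← Matrix.mulVec_mulVec, dot_sym P hP]
  have h2 : x ⬝ᵥ (P * A) *ᵥ x = (P *ᵥ x) ⬝ᵥ (A *ᵥ x) := by
    rw [← Matrix.mulVec_mulVec, dot_sym P hP]
  have h3 : x ⬝ᵥ (Aᵀ * P) *ᵥ x = (P *ᵥ x) ⬝ᵥ (A *ᵥ x) := by
    rw [← Matrix.mulVec_mulVec, Matrix.dotProduct_mulVec, Matrix.vecMul_transpose,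
      dotProduct_comm]
  rw [Matrix.add_mulVec, Matrix.add_mulVec, Matrix.add_mulVec, dotProduct_add,
    dotProduct_add, dotProduct_add, Matrix.smul_mulVec,
    dotProduct_smul, smul_eq_mul, h1, h2, h3]
  ring

lemma dot_shift (In : Matrix (Fin d) (Fin d) ℝ) (hIn : In.IsSymm) (w x : Fin d → ℝ) (c : ℝ) :
    (w + c • x) ⬝ᵥ In *ᵥ (w + c • x)
      = w ⬝ᵥ In *ᵥ w + 2 * c * (x ⬝ᵥ In *ᵥ w) + c ^ 2 * (x ⬝ᵥ In *ᵥ x) := by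
  have hcomm : w ⬝ᵥ In *ᵥ x = x ⬝ᵥ In *ᵥ w := by
    rw [dot_sym In hIn, dotProduct_comm]
  simp only [Matrix.mulVec_add, Matrix.mulVec_smul, add_dotProduct,
    smul_dotProduct, dotProduct_add, dotProduct_smul, smul_eq_mul, hcomm]
  ring

end RiccatiAux

namespace RiccatiAux

variable {d : ℕ}

lemma dot_sym' (M : Matrix (Fin d) (Fin d) ℝ) (hM : M.IsSymm) (v w : Fin d → ℝ) :
    v ⬝ᵥ M *ᵥ w = (M *ᵥ v) ⬝ᵥ w := by
  rw [Matrix.dotProduct_mulVec, ← Matrix.mulVec_transpose, hM.eq]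

set_option maxHeartbeats 2000000 in
lemma key_aux
    (ε : ℝ) (A C : ℝ → Matrix (Fin d) (Fin d) ℝ)
    (In Υ : Matrix (Fin d) (Fin d) ℝ) (hInSymm : In.IsSymm) (hΥ : Υ.IsSymm)
    (g : ℝ → Matrix (Fin d) (Fin d) ℝ) (hgsym : ∀ t, (g t).IsSymm)
    (hg' : ∀ t : ℝ, 0 ≤ t → ∀ i j, HasDerivAt (fun s => g s i j)
      (((2 * ε ^ 2) • (g t * In * g t) + g t * A t + (A t)ᵀ * g t + C t) i j) t)
    (h0 : (Υ - g 0).PosSemidef)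
    (hdom : ∀ t : ℝ, 0 ≤ t →
      (-((2 * ε ^ 2) • (Υ * In * Υ) + Υ * A t + (A t)ᵀ * Υ + C t)).PosSemidef)
    (T : ℝ) (hT : 0 ≤ T)
    (CA H Ca CI L : ℝ)
    (hCA0 : 0 ≤ CA) (hH0 : 0 ≤ H)
    (hCAb : ∀ s ∈ Icc (0:ℝ) T, (∑ i, ∑ j, |A s i j|) ≤ CA)
    (hHb : ∀ s ∈ Icc (0:ℝ) T, (∑ i, ∑ j, |(Υ - g s) i j|) ≤ H)
    (hCa : Ca = ∑ i, ∑ j, |(In * Υ) i j|)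
    (hCI : CI = ∑ i, ∑ j, |In i j|)
    (hL : L = 4 * ε ^ 2 * Ca + 2 * ε ^ 2 * H * CI + 2 * CA + 1)
    (μ : ℝ) (hμ : 0 < μ) :
    ∀ s ∈ Icc (0:ℝ) T, ∀ x : Fin d → ℝ, ‖x‖ = 1 →
      0 < x ⬝ᵥ ((Υ - g s) *ᵥ x) + μ * Real.exp (L * s) * (x ⬝ᵥ x) := by
  have hCa0 : 0 ≤ Ca := hCa ▸ Finset.sum_nonneg fun i _ => Finset.sum_nonneg fun j _ => abs_nonneg _
  have hCI0 : 0 ≤ CI := hCI ▸ Finset.sum_nonneg fun i _ => Finset.sum_nonneg fun j _ => abs_nonneg _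
  have hε2 : (0:ℝ) ≤ ε ^ 2 := sq_nonneg ε
  have hL1 : 1 ≤ L := by
    have n1 : 0 ≤ ε ^ 2 * Ca := mul_nonneg hε2 hCa0
    have n2 : 0 ≤ ε ^ 2 * H * CI := mul_nonneg (mul_nonneg hε2 hH0) hCI0
    nlinarith
  have hL0 : 0 < L := lt_of_lt_of_le one_pos hL1
  by_contra hcon
  push_neg at hcon
  obtain ⟨s₁, hs₁, x₁, hx₁n, hx₁le⟩ := hcon
  classical
  set gt : ℝ → Matrix (Fin d) (Fin d) ℝ := fun t => g (max t 0) with hgt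
  have hgteq : ∀ s : ℝ, 0 ≤ s → gt s = g s := by
    intro s hs
    show g (max s 0) = g s
    rw [max_eq_left hs]
  have hgtc : ∀ i j, Continuous fun t => gt t i j := by
    intro i j
    rw [continuous_iff_continuousAt]
    intro t
    have hc1 : Continuous fun t : ℝ => max t 0 := continuous_id.max continuous_const
    have hc2 : ContinuousAt ((fun u : ℝ => g u i j) ∘ fun t : ℝ => max t 0) t :=
      ContinuousAt.comp ((hg' (max t 0) (le_max_right _ _) i j).continuousAt) hc1.continuousAt
    exact hc2
  set Qf : ℝ → (Fin d → ℝ) → ℝ :=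
    fun s y => y ⬝ᵥ ((Υ - gt s) *ᵥ y) + μ * Real.exp (L * s) * (y ⬝ᵥ y) with hQf
  have hQfc : Continuous fun p : ℝ × (Fin d → ℝ) => Qf p.1 p.2 := by
    refine Continuous.add ?_ ?_
    · show Continuous fun p : ℝ × (Fin d → ℝ) => ∑ i, p.2 i * ∑ j, (Υ - gt p.1) i j * p.2 j
      refine continuous_finset_sum _ fun i _ => ?_
      refine Continuous.mul ((continuous_apply i).comp continuous_snd) ?_
      refine continuous_finset_sum _ fun j _ => ?_
      refine Continuous.mul ?_ ((continuous_apply j).comp continuous_snd)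
      show Continuous fun p : ℝ × (Fin d → ℝ) => Υ i j - gt p.1 i j
      exact continuous_const.sub ((hgtc i j).comp continuous_fst)
    · refine Continuous.mul (Continuous.mul continuous_const ?_) ?_
      · exact Real.continuous_exp.comp (continuous_const.mul continuous_fst)
      · show Continuous fun p : ℝ × (Fin d → ℝ) => ∑ i, p.2 i * p.2 i
        exact continuous_finset_sum _ fun i _ =>
          ((continuous_apply i).comp continuous_snd).mul ((continuous_apply i).comp continuous_snd)
  set S : Set ℝ :=
    Prod.fst '' ((Icc (0:ℝ) T ×ˢ Metric.sphere (0 : Fin d → ℝ) 1) ∩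
      {p : ℝ × (Fin d → ℝ) | Qf p.1 p.2 ≤ 0}) with hS
  have hScpt : IsCompact S := by
    refine IsCompact.image ?_ continuous_fst
    refine IsCompact.inter_right (isCompact_Icc.prod (isCompact_sphere _ _)) ?_
    exact isClosed_le hQfc continuous_const
  have hSne : S.Nonempty := by
    refine ⟨s₁, ⟨(s₁, x₁), ⟨⟨hs₁, ?_⟩, ?_⟩, rfl⟩⟩
    · rwa [mem_sphere_zero_iff_norm]
    · show Qf s₁ x₁ ≤ 0
      show x₁ ⬝ᵥ ((Υ - gt s₁) *ᵥ x₁) + μ * Real.exp (L * s₁) * (x₁ ⬝ᵥ x₁) ≤ 0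
      rw [hgteq s₁ hs₁.1]
      exact hx₁le
  obtain ⟨p₀, hp₀, hp₀fst⟩ := hScpt.sInf_mem hSne
  obtain ⟨⟨hsIcc, hxsph⟩, hQle⟩ := hp₀
  set s₀ : ℝ := p₀.1 with hs₀def
  set x : Fin d → ℝ := p₀.2 with hxdef
  have hxnorm : ‖x‖ = 1 := by rwa [mem_sphere_zero_iff_norm] at hxsph
  have hxabs : ∀ i, |x i| ≤ 1 := abs_entry_le_one hxnorm
  have hσ1 : 1 ≤ x ⬝ᵥ x := one_le_dot_self hxnorm
  have hQles : Qf s₀ x ≤ 0 := hQle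
  have hmin : ∀ t ∈ Icc (0:ℝ) T, ∀ y : Fin d → ℝ, ‖y‖ = 1 → Qf t y ≤ 0 → s₀ ≤ t := by
    intro t ht y hy hQ
    rw [hp₀fst]
    refine csInf_le hScpt.bddBelow ?_
    exact ⟨(t, y), ⟨⟨ht, by rwa [mem_sphere_zero_iff_norm]⟩, hQ⟩, rfl⟩
  have hpos : ∀ t ∈ Icc (0:ℝ) T, t < s₀ → ∀ y : Fin d → ℝ, ‖y‖ = 1 → 0 < Qf t y := by
    intro t ht hts y hy
    by_contra hle
    push_neg at hle
    exact absurd (hmin t ht y hy hle) (not_le.mpr hts)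
  have hs₀0 : 0 ≤ s₀ := hsIcc.1
  have hs₀pos : 0 < s₀ := by
    rcases lt_or_eq_of_le hs₀0 with h | h
    · exact h
    · exfalso
      have h1 : Qf s₀ x = x ⬝ᵥ ((Υ - g 0) *ᵥ x) + μ * Real.exp (L * s₀) * (x ⬝ᵥ x) := by
        show x ⬝ᵥ ((Υ - gt s₀) *ᵥ x) + μ * Real.exp (L * s₀) * (x ⬝ᵥ x) = _
        rw [hgteq s₀ hs₀0, ← h]
      have h2 : 0 ≤ x ⬝ᵥ ((Υ - g 0) *ᵥ x) := by
        have h3 := h0.dotProduct_mulVec_nonneg x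
        simpa using h3
      have h3 : 0 < μ * Real.exp (L * s₀) * (x ⬝ᵥ x) := by
        have he := Real.exp_pos (L * s₀)
        have h4 := mul_pos hμ he
        nlinarith [mul_nonneg h4.le (sub_nonneg.2 hσ1)]
      rw [h1] at hQles
      linarith
  set c : ℝ := μ * Real.exp (L * s₀) with hc
  have hc0 : 0 < c := mul_pos hμ (Real.exp_pos _)
  set M : Matrix (Fin d) (Fin d) ℝ := (Υ - g s₀) + c • (1 : Matrix (Fin d) (Fin d) ℝ) with hM
  have hMquad : ∀ y : Fin d → ℝ, y ⬝ᵥ M *ᵥ y = Qf s₀ y := by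
    intro y
    have e1 : Qf s₀ y = y ⬝ᵥ ((Υ - g s₀) *ᵥ y) + c * (y ⬝ᵥ y) := by
      show y ⬝ᵥ ((Υ - gt s₀) *ᵥ y) + μ * Real.exp (L * s₀) * (y ⬝ᵥ y) = _
      rw [hgteq s₀ hs₀0]
    rw [e1]
    show y ⬝ᵥ (((Υ - g s₀) + c • (1 : Matrix (Fin d) (Fin d) ℝ)) *ᵥ y) = _
    rw [Matrix.add_mulVec, dotProduct_add, Matrix.smul_mulVec, Matrix.one_mulVec,
      dotProduct_smul, smul_eq_mul]
  have hMq1 : ∀ y : Fin d → ℝ, ‖y‖ = 1 → 0 ≤ Qf s₀ y := by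
    intro y hy
    have hcont : ContinuousAt (fun s => Qf s y) s₀ :=
      (hQfc.comp (continuous_id.prodMk continuous_const)).continuousAt
    have htend : Tendsto (fun s => Qf s y) (𝓝[<] s₀) (𝓝 (Qf s₀ y)) :=
      hcont.continuousWithinAt.tendsto
    refine ge_of_tendsto htend ?_
    have h1 : ∀ᶠ t in 𝓝[<] s₀, 0 < t :=
      eventually_nhdsWithin_of_eventually_nhds (eventually_gt_nhds hs₀pos)
    have h2 : ∀ᶠ t in 𝓝[<] s₀, t < s₀ := eventually_mem_nhdsWithin.mono fun t ht => ht
    filter_upwards [h1, h2] with t ht1 ht2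
    exact le_of_lt (hpos t ⟨ht1.le, ht2.le.trans hsIcc.2⟩ ht2 y hy)
  have hMq : ∀ y : Fin d → ℝ, 0 ≤ y ⬝ᵥ M *ᵥ y := by
    intro y
    rcases eq_or_ne y 0 with rfl | hy0
    · simp
    · have hn : ‖y‖ ≠ 0 := norm_ne_zero_iff.mpr hy0
      set u : Fin d → ℝ := ‖y‖⁻¹ • y with hu
      have hun : ‖u‖ = 1 := by
        rw [hu, norm_smul, norm_inv, norm_norm, inv_mul_cancel₀ hn]
      have h1 : 0 ≤ u ⬝ᵥ M *ᵥ u := by rw [hMquad u]; exact hMq1 u hun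
      have hyu : y = ‖y‖ • u := by rw [hu, smul_smul, mul_inv_cancel₀ hn, one_smul]
      have h2 : y ⬝ᵥ M *ᵥ y = ‖y‖ * (‖y‖ * (u ⬝ᵥ M *ᵥ u)) := by
        conv_lhs => rw [hyu]
        rw [smul_dotProduct, Matrix.mulVec_smul, dotProduct_smul,
          smul_eq_mul, smul_eq_mul]
      rw [h2]
      exact mul_nonneg (norm_nonneg y) (mul_nonneg (norm_nonneg y) h1)
  have hq0 : x ⬝ᵥ M *ᵥ x = 0 := le_antisymm (by rw [hMquad x]; exact hQles) (hMq x)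
  have hMsymm : Mᵀ = M := by
    rw [hM, Matrix.transpose_add, Matrix.transpose_sub, Matrix.transpose_smul,
      Matrix.transpose_one, hΥ.eq, (hgsym s₀).eq]
  have hMpsd : M.PosSemidef := by
    refine Matrix.PosSemidef.of_dotProduct_mulVec_nonneg ?_ ?_
    · show Mᴴ = M
      rw [Matrix.conjTranspose_eq_transpose_of_trivial, hMsymm]
    · intro y
      simpa using hMq y
  have hker : M *ᵥ x = 0 := by
    refine (hMpsd.dotProduct_mulVec_zero_iff x).mp ?_
    simpa using hq0
  have he : (Υ - g s₀) *ᵥ x = -(c • x) := by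
    have h1 : (Υ - g s₀) *ᵥ x + c • x = 0 := by
      have h2 := hker
      rw [hM, Matrix.add_mulVec, Matrix.smul_mulVec, Matrix.one_mulVec] at h2
      exact h2
    exact eq_neg_of_add_eq_zero_left h1
  have hgu : g s₀ *ᵥ x = Υ *ᵥ x + c • x := by
    have h1 : Υ *ᵥ x - g s₀ *ᵥ x = -(c • x) := by rw [← Matrix.sub_mulVec]; exact he
    have h3 := sub_eq_iff_eq_add.mp h1
    rw [h3]
    abel
  obtain ⟨i0, hi0⟩ := exists_abs_eq_one hxnorm
  have hcH : c ≤ H := by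
    have h1 : ((Υ - g s₀) *ᵥ x) i0 = -(c * x i0) := by rw [he]; rfl
    have h2 : |((Υ - g s₀) *ᵥ x) i0| ≤ ∑ i, ∑ j, |(Υ - g s₀) i j| :=
      mulVec_entry_abs_le _ x hxabs i0
    have h3 := hHb s₀ hsIcc
    have h4 : |((Υ - g s₀) *ᵥ x) i0| = c := by
      rw [h1, abs_neg, abs_mul, hi0, mul_one, abs_of_pos hc0]
    linarith [h2.trans h3]
  -- quadratic expansions
  have hquadg : x ⬝ᵥ (((2 * ε ^ 2) • (g s₀ * In * g s₀) + g s₀ * A s₀ + (A s₀)ᵀ * g s₀ + C s₀) *ᵥ x)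
      = 2 * ε ^ 2 * ((g s₀ *ᵥ x) ⬝ᵥ In *ᵥ (g s₀ *ᵥ x)) + 2 * ((g s₀ *ᵥ x) ⬝ᵥ (A s₀ *ᵥ x))
        + x ⬝ᵥ C s₀ *ᵥ x := quad_expand _ _ _ _ _ (hgsym s₀) x
  have hquadΥ : x ⬝ᵥ (((2 * ε ^ 2) • (Υ * In * Υ) + Υ * A s₀ + (A s₀)ᵀ * Υ + C s₀) *ᵥ x)
      = 2 * ε ^ 2 * ((Υ *ᵥ x) ⬝ᵥ In *ᵥ (Υ *ᵥ x)) + 2 * ((Υ *ᵥ x) ⬝ᵥ (A s₀ *ᵥ x))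
        + x ⬝ᵥ C s₀ *ᵥ x := quad_expand _ _ _ _ _ hΥ x
  have hdomle : 2 * ε ^ 2 * ((Υ *ᵥ x) ⬝ᵥ In *ᵥ (Υ *ᵥ x)) + 2 * ((Υ *ᵥ x) ⬝ᵥ (A s₀ *ᵥ x))
      + x ⬝ᵥ C s₀ *ᵥ x ≤ 0 := by
    have h1 := (hdom s₀ hs₀0).dotProduct_mulVec_nonneg x
    rw [Matrix.neg_mulVec] at h1
    simp only [star_trivial, dotProduct_neg] at h1
    rw [← hquadΥ]
    linarith
  have hshift : (g s₀ *ᵥ x) ⬝ᵥ In *ᵥ (g s₀ *ᵥ x)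
      = (Υ *ᵥ x) ⬝ᵥ In *ᵥ (Υ *ᵥ x) + 2 * c * (x ⬝ᵥ In *ᵥ (Υ *ᵥ x)) + c ^ 2 * (x ⬝ᵥ In *ᵥ x) := by
    rw [hgu]
    exact dot_shift In hInSymm (Υ *ᵥ x) x c
  have hshiftA : (g s₀ *ᵥ x) ⬝ᵥ (A s₀ *ᵥ x)
      = (Υ *ᵥ x) ⬝ᵥ (A s₀ *ᵥ x) + c * (x ⬝ᵥ (A s₀ *ᵥ x)) := by
    rw [hgu, add_dotProduct, smul_dotProduct, smul_eq_mul]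
  -- bounds on the cross terms
  have hB1a : |x ⬝ᵥ In *ᵥ (Υ *ᵥ x)| ≤ Ca := by
    rw [Matrix.mulVec_mulVec, hCa]
    exact quad_abs_le _ x hxabs
  have hB2a : |x ⬝ᵥ In *ᵥ x| ≤ CI := by
    rw [hCI]
    exact quad_abs_le _ x hxabs
  have hB3a : |x ⬝ᵥ (A s₀ *ᵥ x)| ≤ CA :=
    (quad_abs_le _ x hxabs).trans (hCAb s₀ hsIcc)
  -- derivative of t ↦ Qf t x at s₀
  have hgtderiv : ∀ i j, HasDerivAt (fun t => gt t i j)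
      (((2 * ε ^ 2) • (g s₀ * In * g s₀) + g s₀ * A s₀ + (A s₀)ᵀ * g s₀ + C s₀) i j) s₀ := by
    intro i j
    refine HasDerivAt.congr_of_eventuallyEq (hg' s₀ hs₀0 i j) ?_
    filter_upwards [eventually_gt_nhds hs₀pos] with t ht
    show gt t i j = g t i j
    rw [hgteq t ht.le]
  have hderivF : ∀ i j, HasDerivAt (fun t => (Υ - gt t) i j)
      ((-((2 * ε ^ 2) • (g s₀ * In * g s₀) + g s₀ * A s₀ + (A s₀)ᵀ * g s₀ + C s₀)) i j) s₀ := by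
    intro i j
    exact (hgtderiv i j).const_sub (Υ i j)
  have hφ : HasDerivAt (fun t => Qf t x)
      (x ⬝ᵥ ((-((2 * ε ^ 2) • (g s₀ * In * g s₀) + g s₀ * A s₀ + (A s₀)ᵀ * g s₀ + C s₀)) *ᵥ x)
        + μ * (Real.exp (L * s₀) * L) * (x ⬝ᵥ x)) s₀ := by
    have h1 := hasDerivAt_quad (fun t => Υ - gt t) _ x s₀ hderivF
    have h2 : HasDerivAt (fun t : ℝ => L * t) L s₀ := by
      simpa using (hasDerivAt_id s₀).const_mul L
    have h3 := ((h2.exp).const_mul μ).mul_const (x ⬝ᵥ x)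
    exact h1.add h3
  -- positivity of the derivative value
  have hneg : x ⬝ᵥ ((-((2 * ε ^ 2) • (g s₀ * In * g s₀) + g s₀ * A s₀ + (A s₀)ᵀ * g s₀ + C s₀)) *ᵥ x)
      = -(x ⬝ᵥ (((2 * ε ^ 2) • (g s₀ * In * g s₀) + g s₀ * A s₀ + (A s₀)ᵀ * g s₀ + C s₀) *ᵥ x)) := by
    rw [Matrix.neg_mulVec, dotProduct_neg]
  have hp : 0 < x ⬝ᵥ ((-((2 * ε ^ 2) • (g s₀ * In * g s₀) + g s₀ * A s₀ + (A s₀)ᵀ * g s₀ + C s₀)) *ᵥ x)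
      + μ * (Real.exp (L * s₀) * L) * (x ⬝ᵥ x) := by
    rw [hneg]
    have hDQ : x ⬝ᵥ (((2 * ε ^ 2) • (g s₀ * In * g s₀) + g s₀ * A s₀ + (A s₀)ᵀ * g s₀ + C s₀) *ᵥ x)
        = (2 * ε ^ 2 * ((Υ *ᵥ x) ⬝ᵥ In *ᵥ (Υ *ᵥ x)) + 2 * ((Υ *ᵥ x) ⬝ᵥ (A s₀ *ᵥ x))
            + x ⬝ᵥ C s₀ *ᵥ x)
          + 2 * ε ^ 2 * (2 * c * (x ⬝ᵥ In *ᵥ (Υ *ᵥ x)) + c ^ 2 * (x ⬝ᵥ In *ᵥ x))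
          + 2 * c * (x ⬝ᵥ (A s₀ *ᵥ x)) := by
      rw [hquadg, hshift, hshiftA]
      ring
    have h2c : (0:ℝ) ≤ 2 * c := by linarith
    have hE : (0:ℝ) ≤ 2 * ε ^ 2 := by positivity
    have hX1 : x ⬝ᵥ In *ᵥ (Υ *ᵥ x) ≤ Ca := (le_abs_self _).trans hB1a
    have hX2 : x ⬝ᵥ In *ᵥ x ≤ CI := (le_abs_self _).trans hB2a
    have hX3 : x ⬝ᵥ (A s₀ *ᵥ x) ≤ CA := (le_abs_self _).trans hB3a
    have ht1 : 2 * ε ^ 2 * (2 * c * (x ⬝ᵥ In *ᵥ (Υ *ᵥ x))) ≤ 2 * ε ^ 2 * (2 * c * Ca) :=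
      mul_le_mul_of_nonneg_left (mul_le_mul_of_nonneg_left hX1 h2c) hE
    have ht2 : 2 * ε ^ 2 * (c ^ 2 * (x ⬝ᵥ In *ᵥ x)) ≤ 2 * ε ^ 2 * (c * (H * CI)) := by
      have i1 : c ^ 2 * (x ⬝ᵥ In *ᵥ x) ≤ c ^ 2 * CI :=
        mul_le_mul_of_nonneg_left hX2 (sq_nonneg c)
      have i2 : c ^ 2 * CI ≤ c * (H * CI) := by
        nlinarith [mul_nonneg (mul_nonneg hc0.le (sub_nonneg.2 hcH)) hCI0]
      exact mul_le_mul_of_nonneg_left (i1.trans i2) hE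
    have hB3' : 2 * c * (x ⬝ᵥ (A s₀ *ᵥ x)) ≤ 2 * c * CA :=
      mul_le_mul_of_nonneg_left hX3 h2c
    have hexp : μ * (Real.exp (L * s₀) * L) * (x ⬝ᵥ x) = c * L * (x ⬝ᵥ x) := by
      rw [hc]; ring
    have hcLσ : c * L ≤ c * L * (x ⬝ᵥ x) := by
      nlinarith [mul_nonneg (mul_pos hc0 hL0).le (sub_nonneg.2 hσ1)]
    have hcL : c * L = 2 * ε ^ 2 * (2 * c * Ca) + 2 * ε ^ 2 * (c * (H * CI)) + 2 * c * CA + c := by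
      rw [hL]; ring
    rw [hexp]
    linarith [hDQ.le, hDQ.ge, hdomle, ht1, ht2, hB3', hcLσ, hcL, hc0]
  -- final contradiction via the slope
  have hslope : Tendsto (slope (fun t => Qf t x) s₀) (𝓝[<] s₀) (𝓝 _) :=
    (hasDerivAt_iff_tendsto_slope.mp hφ).mono_left
      (nhdsWithin_mono s₀ fun y (hy : y ∈ Iio s₀) => ne_of_lt hy)
  have h1 : ∀ᶠ t in 𝓝[<] s₀, 0 < slope (fun t => Qf t x) s₀ t := hslope (Ioi_mem_nhds hp)
  have h2 : ∀ᶠ t in 𝓝[<] s₀, 0 < t :=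
    eventually_nhdsWithin_of_eventually_nhds (eventually_gt_nhds hs₀pos)
  have h3 : ∀ᶠ t in 𝓝[<] s₀, t < s₀ := eventually_mem_nhdsWithin.mono fun t ht => ht
  obtain ⟨t, hts, ht0, htlt⟩ := (h1.and (h2.and h3)).exists
  have hQt : 0 < Qf t x := hpos t ⟨ht0.le, htlt.le.trans hsIcc.2⟩ htlt x hxnorm
  rw [slope_def_field] at hts
  have hd1 : t - s₀ < 0 := by linarith
  have hd2 : Qf t x - Qf s₀ x < 0 := by
    by_contra hge
    push_neg at hge
    have := div_nonpos_of_nonneg_of_nonpos hge hd1.le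
    linarith
  linarith

end RiccatiAux
set_option maxHeartbeats 1000000 in
/-- Matrix Riccati comparison (Dieci–Eirola): if g solves
g' = 2ε² g Iⁿ g + gA + Aᵀg + C with Υ - g(0) PSD and
-[2ε² Υ Iⁿ Υ + ΥA + AᵀΥ + C] PSD for all t, then Υ - g(t) stays PSD. -/
theorem riccati_comparison {d n : ℕ} (ε : ℝ) (hε : 0 ≤ ε)
    (A C : ℝ → Matrix (Fin d) (Fin d) ℝ) (hA : Continuous A) (hC : Continuous C)
    (hCsym : ∀ t, (C t).IsSymm)
    (Υ : Matrix (Fin d) (Fin d) ℝ) (hΥ : Υ.IsSymm)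
    (g : ℝ → Matrix (Fin d) (Fin d) ℝ) (hgsym : ∀ t, (g t).IsSymm)
    (hg : ∀ t : ℝ, 0 ≤ t → ∀ i j, HasDerivAt (fun s => g s i j)
      (((2 * ε ^ 2) •
          (g t * Matrix.diagonal (fun i : Fin d => if (i : ℕ) < n then (1:ℝ) else 0) * g t)
        + g t * A t + (A t)ᵀ * g t + C t) i j) t)
    (h0 : (Υ - g 0).PosSemidef)
    (hdom : ∀ t : ℝ, 0 ≤ t →
      (-((2 * ε ^ 2) •
          (Υ * Matrix.diagonal (fun i : Fin d => if (i : ℕ) < n then (1:ℝ) else 0) * Υ)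
        + Υ * A t + (A t)ᵀ * Υ + C t)).PosSemidef) :
    ∀ t : ℝ, 0 ≤ t → (Υ - g t).PosSemidef := by
  intro T hT
  classical
  set In : Matrix (Fin d) (Fin d) ℝ :=
    Matrix.diagonal (fun i : Fin d => if (i : ℕ) < n then (1:ℝ) else 0) with hInDef
  have hInSymm : In.IsSymm := Matrix.isSymm_diagonal _
  have hgtc : ∀ i j, Continuous fun t => g (max t 0) i j := by
    intro i j
    rw [continuous_iff_continuousAt]
    intro t
    have hc1 : Continuous fun t : ℝ => max t 0 := continuous_id.max continuous_const
    have hc2 : ContinuousAt ((fun u : ℝ => g u i j) ∘ fun t : ℝ => max t 0) t :=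
      ContinuousAt.comp ((hg (max t 0) (le_max_right _ _) i j).continuousAt) hc1.continuousAt
    exact hc2
  have hAc : Continuous fun s => ∑ i, ∑ j, |A s i j| := by
    refine continuous_finset_sum _ fun i _ => continuous_finset_sum _ fun j _ => ?_
    exact (hA.matrix_elem i j).abs
  obtain ⟨sA, hsA, hsAmax⟩ := isCompact_Icc.exists_isMaxOn ⟨0, Set.left_mem_Icc.mpr hT⟩
    hAc.continuousOn
  set CA : ℝ := max 0 (∑ i, ∑ j, |A sA i j|) with hCAdef
  have hCA0 : 0 ≤ CA := le_max_left _ _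
  have hCAb : ∀ s ∈ Set.Icc (0:ℝ) T, (∑ i, ∑ j, |A s i j|) ≤ CA := fun s hs =>
    le_trans (hsAmax hs) (le_max_right _ _)
  have hHc : Continuous fun s => ∑ i, ∑ j, |Υ i j - g (max s 0) i j| := by
    refine continuous_finset_sum _ fun i _ => continuous_finset_sum _ fun j _ => ?_
    exact (continuous_const.sub (hgtc i j)).abs
  obtain ⟨sH, hsH, hsHmax⟩ := isCompact_Icc.exists_isMaxOn ⟨0, Set.left_mem_Icc.mpr hT⟩
    hHc.continuousOn
  set H : ℝ := max 0 (∑ i, ∑ j, |Υ i j - g (max sH 0) i j|) with hHdef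
  have hH0 : 0 ≤ H := le_max_left _ _
  have hHb : ∀ s ∈ Set.Icc (0:ℝ) T, (∑ i, ∑ j, |(Υ - g s) i j|) ≤ H := by
    intro s hs
    have h1 : (∑ i, ∑ j, |(Υ - g s) i j|) = ∑ i, ∑ j, |Υ i j - g (max s 0) i j| := by
      rw [max_eq_left hs.1]
      rfl
    rw [h1]
    exact le_trans (hsHmax hs) (le_max_right _ _)
  set Ca : ℝ := ∑ i, ∑ j, |(In * Υ) i j| with hCadef
  set CI : ℝ := ∑ i, ∑ j, |In i j| with hCIdef
  set L : ℝ := 4 * ε ^ 2 * Ca + 2 * ε ^ 2 * H * CI + 2 * CA + 1 with hLdef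
  have key := RiccatiAux.key_aux ε A C In Υ hInSymm hΥ g hgsym hg h0 hdom T hT
    CA H Ca CI L hCA0 hH0 hCAb hHb hCadef hCIdef hLdef
  refine Matrix.PosSemidef.of_dotProduct_mulVec_nonneg ?_ ?_
  · show (Υ - g T)ᴴ = Υ - g T
    rw [Matrix.conjTranspose_eq_transpose_of_trivial, Matrix.transpose_sub, hΥ.eq, (hgsym T).eq]
  · intro y
    have hfin : 0 ≤ y ⬝ᵥ ((Υ - g T) *ᵥ y) := by
      rcases eq_or_ne y 0 with rfl | hy0
      · simp
      · have hn : ‖y‖ ≠ 0 := norm_ne_zero_iff.mpr hy0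
        set u : Fin d → ℝ := ‖y‖⁻¹ • y with hu
        have hun : ‖u‖ = 1 := by rw [hu, norm_smul, norm_inv, norm_norm, inv_mul_cancel₀ hn]
        have hTmem : T ∈ Set.Icc (0:ℝ) T := Set.right_mem_Icc.mpr hT
        have hq : 0 ≤ u ⬝ᵥ ((Υ - g T) *ᵥ u) := by
          by_contra hneg
          push_neg at hneg
          have hσ : 0 < Real.exp (L * T) * (u ⬝ᵥ u) := by
            have h5 := RiccatiAux.one_le_dot_self hun
            nlinarith [Real.exp_pos (L * T)]
          set μ0 : ℝ := -(u ⬝ᵥ ((Υ - g T) *ᵥ u)) / (2 * (Real.exp (L * T) * (u ⬝ᵥ u)))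
            with hμ0
          have hμ0pos : 0 < μ0 := div_pos (by linarith) (by linarith)
          have hk := key μ0 hμ0pos T hTmem u hun
          have he : μ0 * Real.exp (L * T) * (u ⬝ᵥ u) = -(u ⬝ᵥ ((Υ - g T) *ᵥ u)) / 2 := by
            rw [hμ0]
            field_simp
            rw [mul_div_cancel_right₀ _ (ne_of_gt (lt_of_lt_of_le one_pos (RiccatiAux.one_le_dot_self hun)))]
          rw [he] at hk
          linarith
        have hyu : y = ‖y‖ • u := by rw [hu, smul_smul, mul_inv_cancel₀ hn, one_smul]
        have h2 : y ⬝ᵥ ((Υ - g T) *ᵥ y) = ‖y‖ * (‖y‖ * (u ⬝ᵥ ((Υ - g T) *ᵥ u))) := by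
          conv_lhs => rw [hyu]
          rw [smul_dotProduct, Matrix.mulVec_smul, dotProduct_smul,
            smul_eq_mul, smul_eq_mul]
        rw [h2]
        exact mul_nonneg (norm_nonneg y) (mul_nonneg (norm_nonneg y) hq)
    simpa using hfin
end
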